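/- Let h, j, k, n be positive integers with 1 ≤ j ≤ k ≤ n, h = j+k+n+1 odd, and n ≥ ⌊h/2⌋ + 1. Then the Mostar index of P_L(j,k,n) equals 6·(4j + 3j² + 8k + 3k² + 4n + 3n² + 14kj + 6jn + 10kn). -/

import Mathlib

open Finset

/-- The Mostar index of the tree-like phenylene `P_L(j,k,n)` (one full-hexagon with three
linear branches of lengths `j`, `k`, `n`), computed via the cut method. -/
def MoPL (j k n : ℕ) : ℤ :=
  let h : ℕ := j + k + n + 1
  6 * (2 * ((j : ℤ) + 1) * ((n : ℤ) - (k : ℤ)) +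
       2 * ((k : ℤ) + 1) * ((n : ℤ) - (j : ℤ)) +
       2 * ((n : ℤ) + 1) * ((k : ℤ) - (j : ℤ)) +
       4 * ∑ i ∈ Finset.Icc 1 j, ((h : ℤ) + 1 - 2 * (i : ℤ)) +
       4 * ∑ i ∈ Finset.Icc 1 k, ((h : ℤ) + 1 - 2 * (i : ℤ)) +
       4 * ∑ i ∈ Finset.Icc 1 n, |(h : ℤ) + 1 - 2 * (i : ℤ)| +
       2 * ∑ i ∈ Finset.Icc 1 j, ((h : ℤ) - 2 * (i : ℤ)) +
       2 * ∑ i ∈ Finset.Icc 1 k, ((h : ℤ) - 2 * (i : ℤ)) +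
       2 * ∑ i ∈ Finset.Icc 1 n, |(h : ℤ) - 2 * (i : ℤ)|)

lemma sumA (c : ℤ) (N : ℕ) :
    ∑ i ∈ Finset.Icc 1 N, (c - 2 * (i : ℤ)) = c * N - N * (N + 1) := by
  induction N with
  | zero => simp
  | succ m ih =>
      rw [Finset.sum_Icc_succ_top (Nat.succ_le_succ (Nat.zero_le m)), ih]
      push_cast; ring

lemma sumB (c : ℤ) (N : ℕ) :
    ∑ i ∈ Finset.Icc 1 N, (2 * (i : ℤ) - c) = N * (N + 1) - c * N := by
  induction N with
  | zero => simp
  | succ m ih =>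
      rw [Finset.sum_Icc_succ_top (Nat.succ_le_succ (Nat.zero_le m)), ih]
      push_cast; ring

lemma sumAbs (c : ℤ) (a N : ℕ) (haN : a ≤ N)
    (h1 : ∀ i ∈ Finset.Icc 1 a, 0 ≤ c - 2 * (i : ℤ))
    (h2 : ∀ i ∈ Finset.Ioc a N, c - 2 * (i : ℤ) ≤ 0) :
    ∑ i ∈ Finset.Icc 1 N, |c - 2 * (i : ℤ)| =
      (c * a - a * (a + 1)) + ((N * (N + 1) - c * N) - (a * (a + 1) - c * a)) := by
  have hIoc : ∀ M : ℕ, Finset.Icc 1 M = Finset.Ioc 0 M := by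
    intro M; rw [← Finset.Icc_add_one_left_eq_Ioc]; rfl
  have hsplit : ∑ i ∈ Finset.Ioc 0 a, |c - 2 * (i : ℤ)| +
      ∑ i ∈ Finset.Ioc a N, |c - 2 * (i : ℤ)| = ∑ i ∈ Finset.Ioc 0 N, |c - 2 * (i : ℤ)| :=
    Finset.sum_Ioc_consecutive _ (Nat.zero_le a) haN
  rw [hIoc, ← hsplit, ← hIoc]
  have e1 : ∑ i ∈ Finset.Icc 1 a, |c - 2 * (i : ℤ)| =
      ∑ i ∈ Finset.Icc 1 a, (c - 2 * (i : ℤ)) :=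
    Finset.sum_congr rfl fun i hi => abs_of_nonneg (h1 i hi)
  have e2 : ∑ i ∈ Finset.Ioc a N, |c - 2 * (i : ℤ)| =
      ∑ i ∈ Finset.Ioc a N, (2 * (i : ℤ) - c) := by
    refine Finset.sum_congr rfl fun i hi => ?_
    rw [abs_of_nonpos (h2 i hi)]; ring
  have e3 : ∑ i ∈ Finset.Ioc 0 a, (2 * (i : ℤ) - c) +
      ∑ i ∈ Finset.Ioc a N, (2 * (i : ℤ) - c) = ∑ i ∈ Finset.Ioc 0 N, (2 * (i : ℤ) - c) :=
    Finset.sum_Ioc_consecutive _ (Nat.zero_le a) haN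
  have e4 : ∑ i ∈ Finset.Ioc a N, (2 * (i : ℤ) - c) =
      (N * (N + 1) - c * N) - (a * (a + 1) - c * a) := by
    have hb1 := sumB c a
    have hb2 := sumB c N
    rw [hIoc] at hb1 hb2
    linarith [e3]
  rw [e1, e2, sumA, e4]

/-- For `h = j+k+n+1` odd and `n ≥ ⌊h/2⌋ + 1`, the Mostar index of `P_L(j,k,n)` equals
`6(4j + 3j² + 8k + 3k² + 4n + 3n² + 14kj + 6jn + 10kn)`. -/
theorem mostar_PL_large_n_odd (j k n h : ℕ) (hj : 1 ≤ j) (hjk : j ≤ k) (hkn : k ≤ n)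
    (hh : h = j + k + n + 1) (hodd : Odd h) (hn : h / 2 + 1 ≤ n) :
    MoPL j k n =
      6 * (4 * (j : ℤ) + 3 * (j : ℤ) ^ 2 + 8 * (k : ℤ) + 3 * (k : ℤ) ^ 2 + 4 * (n : ℤ) +
           3 * (n : ℤ) ^ 2 + 14 * (k : ℤ) * (j : ℤ) + 6 * (j : ℤ) * (n : ℤ) +
           10 * (k : ℤ) * (n : ℤ)) := by
  obtain ⟨t, ht⟩ := hodd
  have htn1 : t + 1 ≤ n := by omega
  have htn : t ≤ n := by omega
  have hs : (j : ℤ) + k + n = 2 * t := by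
    have : j + k + n = 2 * t := by omega
    exact_mod_cast this
  simp only [MoPL]
  rw [sumA, sumA, sumA, sumA,
    sumAbs (((j + k + n + 1 : ℕ) : ℤ) + 1) (t + 1) n htn1
      (by
        intro i hi
        simp only [Finset.mem_Icc] at hi
        have : (i : ℤ) ≤ (t : ℤ) + 1 := by exact_mod_cast hi.2
        push_cast
        linarith [hs])
      (by
        intro i hi
        simp only [Finset.mem_Ioc] at hi
        have : (t : ℤ) + 1 < (i : ℤ) := by exact_mod_cast hi.1
        push_cast
        linarith [hs]),
    sumAbs ((j + k + n + 1 : ℕ) : ℤ) t n htn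
      (by
        intro i hi
        simp only [Finset.mem_Icc] at hi
        have : (i : ℤ) ≤ (t : ℤ) := by exact_mod_cast hi.2
        push_cast
        linarith [hs])
      (by
        intro i hi
        simp only [Finset.mem_Ioc] at hi
        have : (t : ℤ) < (i : ℤ) := by exact_mod_cast hi.1
        push_cast
        linarith [hs])]
  push_cast
  linear_combination (24 - 18 * (j : ℤ) - 18 * (k : ℤ) - 18 * (n : ℤ) + 36 * (t : ℤ)) * hs
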